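/- For all n ≥ 0, k ∈ ℤ, and any fixed positive integer d, the degenerate poly-Bernoulli polynomials satisfy the multiplication-type formula β_n^{(k)}(x|λ) = Σ_{a=0}^{d−1} Σ_{l=0}^{n} Σ_{p=1}^{l+1} C(n,l) ((−1)^{p+l+1}/p^k) p! (S_2(l+1,p)/(l+1)) β_{n−l}((a+x)/d | λ/d) d^{n−l−1}. -/

import Mathlib

open Finset

/-- The generalized falling factorial `(x|λ)ₙ = x(x−λ)(x−2λ)⋯(x−(n−1)λ)`. -/
noncomputable def genFall (lam x : ℂ) (n : ℕ) : ℂ :=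
  ∏ i ∈ Finset.range n, (x - (i : ℂ) * lam)

/-- The formal power series `(1+λt)^{x/λ} = Σ_{n≥0} (x|λ)ₙ tⁿ/n!`. -/
noncomputable def degExp (lam x : ℂ) : PowerSeries ℂ :=
  PowerSeries.mk fun n => genFall lam x n / (n.factorial : ℂ)

/-- The formal power series `1 - e^{-t}`. -/
noncomputable def oneSubExpNeg : PowerSeries ℂ :=
  PowerSeries.mk fun n => if n = 0 then 0 else -((-1 : ℂ) ^ n) / (n.factorial : ℂ)

/-- The formal power series `Li_k(1 - e^{-t}) = Σ_{n≥1} (1-e^{-t})ⁿ/nᵏ`; since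
`(1-e^{-t})ⁿ` has order at least `n`, the coefficient of `tˡ` only involves `n ≤ l`. -/
noncomputable def polyLogComp (k : ℤ) : PowerSeries ℂ :=
  PowerSeries.mk fun l =>
    ∑ n ∈ Finset.Icc 1 l, ((n : ℂ) ^ k)⁻¹ * PowerSeries.coeff l (oneSubExpNeg ^ n)

/-- Stirling numbers of the second kind `S₂(n, k)`. -/
def S2 : ℕ → ℕ → ℕ
  | 0, 0 => 1
  | 0, _ + 1 => 0
  | _ + 1, 0 => 0
  | n + 1, k + 1 => (k + 1) * S2 n (k + 1) + S2 n k

section Aux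

open PowerSeries

lemma genFall_succ' (lam x : ℂ) (n : ℕ) :
    genFall lam x (n+1) = genFall lam x n * (x - n * lam) := Finset.prod_range_succ _ _

lemma genFall_add (lam u v : ℂ) (n : ℕ) :
    genFall lam (u+v) n
      = ∑ j ∈ Finset.range (n+1), (n.choose j : ℂ) * genFall lam u j * genFall lam v (n-j) := by
  induction n with
  | zero => simp [genFall]
  | succ n ih =>
    rw [genFall_succ', ih, Finset.sum_mul]
    have key : ∀ j ∈ Finset.range (n+1),
        (n.choose j : ℂ) * genFall lam u j * genFall lam v (n-j) * (u + v - n * lam)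
        = ((n.choose j : ℂ) * (genFall lam u j * (u - j*lam)) * genFall lam v (n-j))
          + ((n.choose j : ℂ) * genFall lam u j * (genFall lam v (n-j) * (v - (n-j : ℕ)*lam))) := by
      intro j hj
      have hj' : j ≤ n := Nat.lt_succ_iff.mp (Finset.mem_range.mp hj)
      have : ((n - j : ℕ) : ℂ) = (n : ℂ) - j := by
        push_cast [Nat.cast_sub hj']; ring
      rw [this]; ring
    rw [Finset.sum_congr rfl key, Finset.sum_add_distrib]
    have e1 : ∀ j ∈ Finset.range (n+1),
        (n.choose j : ℂ) * (genFall lam u j * (u - j*lam)) * genFall lam v (n-j)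
        = (n.choose j : ℂ) * genFall lam u (j+1) * genFall lam v (n-j) := by
      intro j _; rw [genFall_succ']
    have e2 : ∀ j ∈ Finset.range (n+1),
        (n.choose j : ℂ) * genFall lam u j * (genFall lam v (n-j) * (v - (n-j : ℕ)*lam))
        = (n.choose j : ℂ) * genFall lam u j * genFall lam v (n+1-j) := by
      intro j hj
      have hj' : j ≤ n := Nat.lt_succ_iff.mp (Finset.mem_range.mp hj)
      rw [show n+1-j = (n-j)+1 from by omega, genFall_succ']
    rw [Finset.sum_congr rfl e1, Finset.sum_congr rfl e2]
    rw [Finset.sum_range_succ' (fun j => ((n+1).choose j : ℂ) * genFall lam u j * genFall lam v (n+1-j)) (n+1)]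
    have e3 : ∀ j ∈ Finset.range (n+1),
        (((n+1).choose (j+1) : ℕ) : ℂ) * genFall lam u (j+1) * genFall lam v (n+1-(j+1))
        = (n.choose j : ℂ) * genFall lam u (j+1) * genFall lam v (n-j)
          + (n.choose (j+1) : ℂ) * genFall lam u (j+1) * genFall lam v (n-j) := by
      intro j _
      rw [show n+1-(j+1) = n-j from by omega, Nat.choose_succ_succ]
      push_cast; ring
    rw [Finset.sum_congr rfl e3, Finset.sum_add_distrib]
    have e4 : (∑ j ∈ Finset.range (n+1),
        (n.choose (j+1) : ℂ) * genFall lam u (j+1) * genFall lam v (n-j))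
        + (((n+1).choose 0 : ℕ) : ℂ) * genFall lam u 0 * genFall lam v (n+1-0)
        = ∑ j ∈ Finset.range (n+1), (n.choose j : ℂ) * genFall lam u j * genFall lam v (n+1-j) := by
      have := Finset.sum_range_succ' (fun j => (n.choose j : ℂ) * genFall lam u j * genFall lam v (n+1-j)) (n+1)
      simp only [show ∀ j, n+1-(j+1) = n-j from fun j => by omega] at this
      rw [Finset.sum_range_succ (fun j => (n.choose j : ℂ) * genFall lam u j * genFall lam v (n+1-j)) (n+1)] at this
      simp [Nat.choose_succ_self] at this ⊢
      rw [this]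
    rw [add_assoc, e4]

lemma degExp_zero (lam : ℂ) : degExp lam 0 = 1 := by
  ext n
  rw [degExp, coeff_mk]
  cases n with
  | zero => simp [genFall]
  | succ m =>
    rw [PowerSeries.coeff_one]
    simp only [Nat.succ_ne_zero, if_false]
    have : genFall lam 0 (m+1) = 0 := by
      rw [genFall]
      apply Finset.prod_eq_zero (Finset.mem_range.mpr (Nat.succ_pos m))
      simp
    simp [this]

lemma degExp_add (lam u v : ℂ) : degExp lam (u+v) = degExp lam u * degExp lam v := by
  ext n
  rw [PowerSeries.coeff_mul, degExp, coeff_mk, genFall_add,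
    Finset.Nat.sum_antidiagonal_eq_sum_range_succ_mk, Finset.sum_div]
  refine Finset.sum_congr rfl fun j hj => ?_
  have hj' : j ≤ n := Nat.lt_succ_iff.mp (Finset.mem_range.mp hj)
  rw [degExp, degExp, coeff_mk, coeff_mk]
  rw [Nat.choose_eq_factorial_div_factorial hj']
  have h1 : (j.factorial : ℂ) ≠ 0 := Nat.cast_ne_zero.mpr (Nat.factorial_ne_zero _)
  have h2 : ((n-j).factorial : ℂ) ≠ 0 := Nat.cast_ne_zero.mpr (Nat.factorial_ne_zero _)
  have h3 : (n.factorial : ℂ) ≠ 0 := Nat.cast_ne_zero.mpr (Nat.factorial_ne_zero _)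
  have hc : ((n.factorial / (j.factorial * (n-j).factorial) : ℕ) : ℂ)
      = (n.factorial : ℂ) / ((j.factorial : ℂ) * ((n-j).factorial : ℂ)) := by
    rw [Nat.cast_div (Nat.factorial_mul_factorial_dvd_factorial hj')
      (by push_cast; exact mul_ne_zero h1 h2)]
    push_cast; ring
  rw [hc]
  field_simp

lemma degExp_nat (lam : ℂ) (m : ℕ) : degExp lam 1 ^ m = degExp lam (m : ℂ) := by
  induction m with
  | zero => simp [degExp_zero]
  | succ m ih => rw [pow_succ, ih, ← degExp_add]; norm_num

lemma deriv_oneSubExpNeg : d⁄dX ℂ oneSubExpNeg = 1 - oneSubExpNeg := by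
  ext m
  rw [PowerSeries.coeff_derivative, oneSubExpNeg, coeff_mk, map_sub, coeff_mk]
  cases m with
  | zero => simp
  | succ m =>
    rw [PowerSeries.coeff_one]
    simp only [Nat.succ_ne_zero, if_false]
    have h1 : ((m+1).factorial : ℂ) ≠ 0 := Nat.cast_ne_zero.mpr (Nat.factorial_ne_zero _)
    have hm2 : ((m : ℂ) + 1 + 1) ≠ 0 := by
      have : (((m+2 : ℕ)) : ℂ) ≠ 0 := Nat.cast_ne_zero.mpr (by omega)
      intro h; exact this (by push_cast; linear_combination h)
    rw [Nat.factorial_succ (m+1)]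
    push_cast
    rw [pow_succ, pow_succ]
    field_simp
    ring

lemma coeff_pow_oneSubExpNeg (m p : ℕ) :
    PowerSeries.coeff m (oneSubExpNeg ^ p)
      = (-1 : ℂ) ^ (m + p) * (p.factorial : ℂ) * (S2 m p : ℂ) / (m.factorial : ℂ) := by
  induction m generalizing p with
  | zero =>
    rw [show ((PowerSeries.coeff 0) (oneSubExpNeg ^ p))
        = (PowerSeries.constantCoeff) (oneSubExpNeg ^ p) from by
      rw [← PowerSeries.coeff_zero_eq_constantCoeff]]
    rw [map_pow]
    have : PowerSeries.constantCoeff oneSubExpNeg = 0 := by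
      rw [← PowerSeries.coeff_zero_eq_constantCoeff, oneSubExpNeg, coeff_mk]; simp
    rw [this]
    cases p with
    | zero => simp [S2]
    | succ q => simp [S2, zero_pow]
  | succ m ih =>
    cases p with
    | zero => simp [S2, PowerSeries.coeff_one]
    | succ q =>
      have hder := Derivation.leibniz_pow (d⁄dX ℂ) (a := oneSubExpNeg) (q+1)
      rw [deriv_oneSubExpNeg] at hder
      have hder' : d⁄dX ℂ (oneSubExpNeg ^ (q+1))
          = (((q : ℂ)+1)) • (oneSubExpNeg ^ q - oneSubExpNeg ^ (q+1)) := by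
        rw [hder]
        rw [smul_eq_mul]
        rw [show oneSubExpNeg ^ (q+1-1) * (1 - oneSubExpNeg)
            = oneSubExpNeg ^ q - oneSubExpNeg ^ (q+1) from by
          rw [Nat.add_sub_cancel, mul_sub, mul_one, ← pow_succ]]
        rw [← Nat.cast_smul_eq_nsmul ℂ]
        push_cast
        rfl
      have hco := congrArg (PowerSeries.coeff m) hder'
      rw [PowerSeries.coeff_derivative, map_smul, map_sub, ih, ih, smul_eq_mul] at hco
      have hm1 : ((m : ℂ) + 1) ≠ 0 := by
        have : (((m+1 : ℕ)) : ℂ) ≠ 0 := Nat.cast_ne_zero.mpr (by omega)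
        push_cast at this; exact this
      have hrec : (S2 (m+1) (q+1) : ℂ) = ((q:ℂ)+1) * (S2 m (q+1) : ℂ) + (S2 m q : ℂ) := by
        show ((S2 (m+1) (q+1) : ℕ) : ℂ) = _
        rw [show S2 (m+1) (q+1) = (q+1) * S2 m (q+1) + S2 m q from rfl]
        push_cast; ring
      have hmf : ((m).factorial : ℂ) ≠ 0 := Nat.cast_ne_zero.mpr (Nat.factorial_ne_zero _)
      have hmf1 : ((m+1).factorial : ℂ) ≠ 0 := Nat.cast_ne_zero.mpr (Nat.factorial_ne_zero _)
      have := hco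
      field_simp at this ⊢
      rw [hrec, Nat.factorial_succ m, Nat.factorial_succ q]
      rw [show m+1+(q+1) = (m+q)+1+1 from by omega, pow_succ, pow_succ]
      push_cast
      push_cast [Nat.factorial_succ q, show m+(q+1) = (m+q)+1 from by omega, pow_succ] at this
      linear_combination this

lemma rescale_degExp (lam y : ℂ) (d : ℕ) (hd : (d : ℂ) ≠ 0) :
    PowerSeries.rescale (d : ℂ) (degExp (lam / d) y) = degExp lam ((d : ℂ) * y) := by
  ext n
  rw [PowerSeries.coeff_rescale, degExp, degExp, coeff_mk, coeff_mk]
  have : (d : ℂ) ^ n * genFall (lam / d) y n = genFall lam ((d : ℂ) * y) n := by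
    rw [genFall, genFall, show (d:ℂ)^n = ∏ _i ∈ Finset.range n, (d:ℂ) from by
      rw [Finset.prod_const, Finset.card_range], ← Finset.prod_mul_distrib]
    refine Finset.prod_congr rfl fun i _ => ?_
    field_simp
  rw [← this]
  ring

lemma aux_scalar (n l p : ℕ) (b s dd pk : ℂ) (hln : l ≤ n) :
    (n.factorial : ℂ)/dd * ((pk)⁻¹ * ((-1:ℂ)^(l+1+p) * (p.factorial : ℂ) * s / ((l+1).factorial : ℂ))
        * (dd^(n-l) * b / ((n-l).factorial : ℂ)))
    = (n.choose l : ℂ) * ((-1:ℂ)^(p+l+1)/pk) * (p.factorial : ℂ) * (s/((l:ℂ)+1)) * b * (dd^(n-l)/dd) := by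
  have hlf : ((l).factorial : ℂ) ≠ 0 := Nat.cast_ne_zero.mpr (Nat.factorial_ne_zero _)
  have hnlf : ((n-l).factorial : ℂ) ≠ 0 := Nat.cast_ne_zero.mpr (Nat.factorial_ne_zero _)
  have hli : ((l).factorial : ℂ) * ((l).factorial : ℂ)⁻¹ = 1 := mul_inv_cancel₀ hlf
  have hnli : ((n-l).factorial : ℂ) * ((n-l).factorial : ℂ)⁻¹ = 1 := mul_inv_cancel₀ hnlf
  have hchoose : ((n.choose l : ℕ) : ℂ) * (l.factorial : ℂ) * ((n-l).factorial : ℂ)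
      = (n.factorial : ℂ) := by
    exact_mod_cast congrArg (Nat.cast (R := ℂ)) (Nat.choose_mul_factorial_mul_factorial hln)
  rw [Nat.factorial_succ l, show l+1+p = p+l+1 from by omega]
  push_cast
  simp only [div_eq_mul_inv, mul_inv]
  set c : ℂ := pk⁻¹ * (-1:ℂ)^(p+l+1) * (p.factorial : ℂ) * s * b * dd^(n-l) * dd⁻¹
    * (((l:ℂ)+1))⁻¹ with hc
  linear_combination (-1 * c * ((l.factorial : ℂ))⁻¹ * (((n-l).factorial : ℂ))⁻¹) * hchoose
    + (c * (n.choose l : ℂ) * ((n-l).factorial : ℂ) * (((n-l).factorial : ℂ))⁻¹) * hli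
    + (c * (n.choose l : ℂ)) * hnli

end Aux

/-- the multiplication-type formula `βₙ⁽ᵏ⁾(x|λ) = Σ_{a=0}^{d−1}
Σ_{l=0}^{n} Σ_{p=1}^{l+1} C(n,l) ((−1)^{p+l+1}/pᵏ) p! (S₂(l+1,p)/(l+1))
β_{n−l}((a+x)/d | λ/d) d^{n−l−1}` (the exponent `n−l−1` is an integer, possibly `−1`). -/
theorem degenerate_poly_bernoulli_multiplication (k : ℤ) (lam : ℂ) (d : ℕ) (hd : 0 < d)
    (βk : ℕ → ℂ → ℂ) (β : ℂ → ℕ → ℂ → ℂ)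
    (hβk : ∀ x : ℂ,
      (PowerSeries.mk fun n => βk n x / (n.factorial : ℂ)) * (degExp lam 1 - 1)
        = polyLogComp k * degExp lam x)
    (hβ : ∀ mu x : ℂ,
      (PowerSeries.mk fun n => β mu n x / (n.factorial : ℂ)) * (degExp mu 1 - 1)
        = PowerSeries.X * degExp mu x)
    (n : ℕ) (x : ℂ) :
    βk n x = ∑ a ∈ Finset.range d, ∑ l ∈ Finset.range (n + 1), ∑ p ∈ Finset.Icc 1 (l + 1),
      (n.choose l : ℂ) * ((-1 : ℂ) ^ (p + l + 1) / (p : ℂ) ^ k) * (p.factorial : ℂ)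
        * ((S2 (l + 1) p : ℂ) / ((l : ℂ) + 1))
        * β (lam / (d : ℂ)) (n - l) (((a : ℂ) + x) / (d : ℂ))
        * (d : ℂ) ^ ((n : ℤ) - (l : ℤ) - 1) := by
  classical
  have hdC : (d : ℂ) ≠ 0 := Nat.cast_ne_zero.mpr hd.ne'
  set E1 : PowerSeries ℂ := degExp lam 1 with hE1
  set Ex : PowerSeries ℂ := degExp lam x with hEx
  set L : PowerSeries ℂ := polyLogComp k with hL
  set A : PowerSeries ℂ := PowerSeries.mk fun m => βk m x / (m.factorial : ℂ) with hA
  set B : ℕ → PowerSeries ℂ := fun a =>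
    PowerSeries.mk fun m => β (lam / d) m (((a : ℂ) + x) / d) / (m.factorial : ℂ) with hB
  set T : PowerSeries ℂ := ∑ a ∈ Finset.range d, PowerSeries.rescale (d : ℂ) (B a) with hT
  set S : PowerSeries ℂ := ∑ a ∈ Finset.range d, E1 ^ a with hS
  set M : PowerSeries ℂ := PowerSeries.mk fun l => PowerSeries.coeff (l+1) L with hM
  -- L = X * M
  have hXM : L = PowerSeries.X * M := by
    ext m
    cases m with
    | zero =>
      rw [hL, polyLogComp, PowerSeries.coeff_mk]
      simp [PowerSeries.coeff_zero_eq_constantCoeff]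
    | succ m =>
      rw [PowerSeries.coeff_succ_X_mul, hM, PowerSeries.coeff_mk]
  -- step 1-3
  have step3 : T * (degExp lam (d : ℂ) - 1) = (PowerSeries.C (d : ℂ) * PowerSeries.X) * (S * Ex) := by
    rw [hT, Finset.sum_mul]
    have : ∀ a ∈ Finset.range d,
        PowerSeries.rescale (d : ℂ) (B a) * (degExp lam (d : ℂ) - 1)
          = (PowerSeries.C (d : ℂ) * PowerSeries.X) * (E1 ^ a * Ex) := by
      intro a _
      have h0 := congrArg (PowerSeries.rescale (d : ℂ)) (hβ (lam / d) (((a : ℂ) + x) / d))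
      rw [map_mul, map_sub, map_one, map_mul] at h0
      rw [rescale_degExp lam 1 d hdC, rescale_degExp lam _ d hdC] at h0
      rw [mul_one, show (d : ℂ) * (((a : ℂ) + x) / d) = (a : ℂ) + x from by field_simp] at h0
      have hresX : PowerSeries.rescale (d : ℂ) (PowerSeries.X : PowerSeries ℂ)
          = PowerSeries.C (d : ℂ) * PowerSeries.X := by
        ext m
        rw [PowerSeries.coeff_rescale, PowerSeries.coeff_C_mul, PowerSeries.coeff_X]
        by_cases h : m = 1 <;> simp [h]
      rw [hresX] at h0
      have hBa : B a = PowerSeries.mk fun m => β (lam / d) m (((a : ℂ) + x) / d) / (m.factorial : ℂ) := rfl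
      rw [← hBa] at h0
      rw [h0, degExp_add lam (a : ℂ) x, ← degExp_nat, mul_assoc]
    rw [Finset.sum_congr rfl this, ← Finset.mul_sum, ← Finset.sum_mul]
  -- step 4
  have step4 : degExp lam (d : ℂ) - 1 = (E1 - 1) * S := by
    have := geom_sum_mul E1 d
    rw [← degExp_nat, ← hE1, ← this]
    ring
  -- step 5 : cancel S
  have hSne : S ≠ 0 := by
    intro h
    have : PowerSeries.constantCoeff S = 0 := by rw [h]; simp
    rw [hS, map_sum] at this
    have he : ∀ a ∈ Finset.range d, PowerSeries.constantCoeff (E1 ^ a) = 1 := by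
      intro a _
      rw [map_pow, hE1, ← PowerSeries.coeff_zero_eq_constantCoeff, degExp, PowerSeries.coeff_mk]
      simp [genFall]
    rw [Finset.sum_congr rfl he, Finset.sum_const, Finset.card_range, nsmul_eq_mul, mul_one] at this
    exact hdC this
  have step5 : T * (E1 - 1) = PowerSeries.C (d : ℂ) * PowerSeries.X * Ex := by
    have h1 : T * ((E1 - 1) * S) = (PowerSeries.C (d : ℂ) * PowerSeries.X * Ex) * S := by
      rw [← step4, step3]; ring
    have h2 : (T * (E1 - 1)) * S = (PowerSeries.C (d : ℂ) * PowerSeries.X * Ex) * S := by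
      rw [mul_assoc]; exact h1
    exact mul_right_cancel₀ hSne h2
  -- step 6 : C d * A = M * T
  have hE1ne : E1 - 1 ≠ 0 := by
    intro h
    have : PowerSeries.coeff 1 (E1 - 1) = 0 := by rw [h]; simp
    rw [map_sub, hE1, degExp, PowerSeries.coeff_mk, PowerSeries.coeff_one] at this
    simp [genFall] at this
  have hXne : (PowerSeries.X : PowerSeries ℂ) ≠ 0 := PowerSeries.X_ne_zero
  have step6 : PowerSeries.C (d : ℂ) * A = M * T := by
    have h1 : (PowerSeries.C (d : ℂ) * A) * ((E1 - 1) * PowerSeries.X)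
        = (M * T) * ((E1 - 1) * PowerSeries.X) := by
      have hk := hβk x
      rw [← hEx] at hk
      calc (PowerSeries.C (d : ℂ) * A) * ((E1 - 1) * PowerSeries.X)
          = (A * (E1 - 1)) * (PowerSeries.C (d : ℂ) * PowerSeries.X) := by ring
        _ = (L * Ex) * (PowerSeries.C (d : ℂ) * PowerSeries.X) := by rw [hk]
        _ = M * (PowerSeries.C (d : ℂ) * PowerSeries.X * Ex) * PowerSeries.X := by
            rw [hXM]; ring
        _ = M * (T * (E1 - 1)) * PowerSeries.X := by rw [step5]
        _ = (M * T) * ((E1 - 1) * PowerSeries.X) := by ring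
    exact mul_right_cancel₀ (mul_ne_zero hE1ne hXne) h1
  -- coefficient extraction
  have hcoeff : (d : ℂ) * (βk n x / (n.factorial : ℂ))
      = ∑ l ∈ Finset.range (n+1),
          PowerSeries.coeff (l+1) L
            * ∑ a ∈ Finset.range d,
                (d : ℂ) ^ (n-l) * β (lam / d) (n-l) (((a : ℂ) + x) / d) / ((n-l).factorial : ℂ) := by
    have := congrArg (PowerSeries.coeff n) step6
    rw [PowerSeries.coeff_C_mul, hA, PowerSeries.coeff_mk, PowerSeries.coeff_mul,
      Finset.Nat.sum_antidiagonal_eq_sum_range_succ_mk] at this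
    rw [this]
    refine Finset.sum_congr rfl fun l _ => ?_
    rw [hM, PowerSeries.coeff_mk, hT, map_sum]
    congr 1
    refine Finset.sum_congr rfl fun a _ => ?_
    rw [PowerSeries.coeff_rescale, hB, PowerSeries.coeff_mk]
    ring
  have hnf : (n.factorial : ℂ) ≠ 0 := Nat.cast_ne_zero.mpr (Nat.factorial_ne_zero _)
  have hβkn : βk n x = ∑ l ∈ Finset.range (n+1), ∑ a ∈ Finset.range d,
      ((n.factorial : ℂ) / d) * (PowerSeries.coeff (l+1) L
        * ((d : ℂ) ^ (n-l) * β (lam / d) (n-l) (((a : ℂ) + x) / d) / ((n-l).factorial : ℂ))) := by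
    have h2 : (∑ l ∈ Finset.range (n+1), ∑ a ∈ Finset.range d,
        ((n.factorial : ℂ) / d) * (PowerSeries.coeff (l+1) L
          * ((d : ℂ) ^ (n-l) * β (lam / d) (n-l) (((a : ℂ) + x) / d) / ((n-l).factorial : ℂ))))
        = ((n.factorial : ℂ) / d) * ∑ l ∈ Finset.range (n+1),
            PowerSeries.coeff (l+1) L
              * ∑ a ∈ Finset.range d,
                  (d : ℂ) ^ (n-l) * β (lam / d) (n-l) (((a : ℂ) + x) / d) / ((n-l).factorial : ℂ) := by
      rw [Finset.mul_sum]
      refine Finset.sum_congr rfl fun l _ => ?_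
      rw [Finset.mul_sum, Finset.mul_sum]
    rw [h2, ← hcoeff]
    field_simp
  rw [hβkn, Finset.sum_comm]
  refine Finset.sum_congr rfl fun a _ => ?_
  refine Finset.sum_congr rfl fun l hl => ?_
  have hln : l ≤ n := Nat.lt_succ_iff.mp (Finset.mem_range.mp hl)
  -- expand coeff L
  rw [hL, polyLogComp, PowerSeries.coeff_mk, Finset.sum_mul, Finset.mul_sum]
  refine Finset.sum_congr rfl fun p hp => ?_
  obtain ⟨hp1, hp2⟩ := Finset.mem_Icc.mp hp
  have hzpow : (d : ℂ) ^ ((n : ℤ) - (l : ℤ) - 1) = (d : ℂ) ^ (n-l) / d := by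
    rw [show (n : ℤ) - (l : ℤ) - 1 = ((n - l : ℕ) : ℤ) - 1 from by omega, zpow_sub₀ hdC,
      zpow_one, zpow_natCast]
  rw [coeff_pow_oneSubExpNeg, hzpow]
  exact aux_scalar n l p (β (lam / d) (n-l) (((a : ℂ) + x) / d)) (S2 (l+1) p : ℂ) (d : ℂ)
    ((p : ℂ) ^ k) hln
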